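/- Let n = 2k+1 with k ≥ 2 (so n ≥ 5 odd), let A be the Cartan matrix of type C_n, and let σ be any permutation of {1,…,n}. If α and β are positive roots of type C_n (written in simple-root coordinates, viewed as integer vectors in ℤⁿ) satisfying B_σ·α = B_σ·β, then α = β. -/
import Mathlib


open Matrix

/-- The Cartan matrix of type `Cₙ` (nodes indexed `0, …, n-1`; the long root is the last
node): `a i i = 2`, consecutive nodes give `-1`, except `a (n-1) (n-2) = -2`. -/
def cartanC (n : ℕ) : Matrix (Fin n) (Fin n) ℤ :=
  fun i j => if i = j then 2
    else if i.val + 1 = j.val then -1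
    else if j.val + 1 = i.val then (if i.val = n - 1 then -2 else -1) else 0

/-- The acyclic exchange matrix `B_σ` attached to a Cartan matrix `A` and a permutation `σ`:
`b i i = 0`, `b i j = -a i j` if `σ i < σ j`, and `b i j = a i j` if `σ i > σ j`. -/
def Bmat {n : ℕ} (A : Matrix (Fin n) (Fin n) ℤ) (σ : Equiv.Perm (Fin n)) :
    Matrix (Fin n) (Fin n) ℤ :=
  fun i j => if i = j then 0 else if σ i < σ j then -A i j else A i j

/-- The positive roots of type `Cₙ` in simple-root coordinates (nodes `0`-indexed):
either `1` on an interval `[a, b]` and `0` elsewhere, or `1` on `[a, b-1]`, `2` on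
`[b, n-2]`, `1` at `n-1` and `0` elsewhere (with `a ≤ b ≤ n-2`). -/
def IsPosRootC (n : ℕ) (v : Fin n → ℤ) : Prop :=
  (∃ a b : ℕ, a ≤ b ∧ b < n ∧
    v = fun i => if a ≤ i.val ∧ i.val ≤ b then 1 else 0) ∨
  (∃ a b : ℕ, a ≤ b ∧ b ≤ n - 2 ∧
    v = fun i => if i.val = n - 1 then 1
      else if b ≤ i.val then 2 else if a ≤ i.val then 1 else 0)

lemma bmat_eq_zero {n : ℕ} (σ : Equiv.Perm (Fin n)) {i j : Fin n}
    (h1 : i.val + 1 ≠ j.val) (h2 : j.val + 1 ≠ i.val) :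
    Bmat (cartanC n) σ i j = 0 := by
  unfold Bmat cartanC
  split_ifs <;> omega

lemma cartanC_right {n : ℕ} {i j : Fin n} (h : i.val + 1 = j.val) :
    cartanC n i j = -1 := by
  unfold cartanC
  rw [if_neg (by rintro rfl; omega), if_pos h]

lemma cartanC_left {n : ℕ} {i j : Fin n} (h : j.val + 1 = i.val) (h2 : i.val ≠ n - 1) :
    cartanC n i j = -1 := by
  unfold cartanC
  rw [if_neg (by rintro rfl; omega), if_neg (by omega), if_pos h, if_neg h2]

lemma bmat_pm_one {n : ℕ} (σ : Equiv.Perm (Fin n)) {i j : Fin n}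
    (hij : i.val ≠ j.val) (hA : cartanC n i j = -1) :
    Bmat (cartanC n) σ i j = 1 ∨ Bmat (cartanC n) σ i j = -1 := by
  unfold Bmat
  rw [if_neg (fun e => hij (congrArg Fin.val e))]
  split_ifs
  · left; rw [hA]; norm_num
  · right; exact hA

lemma sq_helper {b₁ b₂ x y : ℤ} (h₁ : b₁ = 1 ∨ b₁ = -1) (h₂ : b₂ = 1 ∨ b₂ = -1)
    (h : b₁ * x + b₂ * y = 0) : y ^ 2 = x ^ 2 := by
  have h' : y = x ∨ y = -x := by
    rcases h₁ with rfl | rfl <;> rcases h₂ with rfl | rfl <;> omega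
  rcases h' with rfl | rfl <;> ring

lemma first_eq {n : ℕ} (σ : Equiv.Perm (Fin n)) (w : Fin n → ℤ)
    (hw : (Bmat (cartanC n) σ).mulVec w = 0) (hn : 1 < n) :
    w ⟨1, hn⟩ = 0 := by
  have e := congrFun hw ⟨0, by omega⟩
  simp only [Matrix.mulVec, dotProduct, Pi.zero_apply] at e
  rw [← Finset.sum_subset (Finset.subset_univ ({⟨1, hn⟩} : Finset (Fin n)))
    (by
      intro x _ hx
      simp only [Finset.mem_singleton, Fin.ext_iff, Fin.val_mk] at hx
      rw [bmat_eq_zero σ (i := ⟨0, by omega⟩) (j := x)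
        (by simp only [Fin.val_mk]; omega) (by simp only [Fin.val_mk]; omega), zero_mul])] at e
  rw [Finset.sum_singleton] at e
  rcases bmat_pm_one σ (i := (⟨0, by omega⟩ : Fin n)) (j := ⟨1, hn⟩)
      (by simp) (cartanC_right (by simp)) with hb | hb <;>
    rw [hb] at e <;> linarith

lemma interior_eq {n : ℕ} (σ : Equiv.Perm (Fin n)) (w : Fin n → ℤ)
    (hw : (Bmat (cartanC n) σ).mulVec w = 0) (m : ℕ) (hm : m + 2 < n) :
    w ⟨m + 2, hm⟩ ^ 2 = w ⟨m, by omega⟩ ^ 2 := by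
  have e := congrFun hw ⟨m + 1, by omega⟩
  simp only [Matrix.mulVec, dotProduct, Pi.zero_apply] at e
  rw [← Finset.sum_subset
    (Finset.subset_univ ({⟨m, by omega⟩, ⟨m + 2, hm⟩} : Finset (Fin n)))
    (by
      intro x _ hx
      simp only [Finset.mem_insert, Finset.mem_singleton, Fin.ext_iff, Fin.val_mk] at hx
      push_neg at hx
      obtain ⟨hx1, hx2⟩ := hx
      rw [bmat_eq_zero σ (i := ⟨m + 1, by omega⟩) (j := x)
        (by simp only [Fin.val_mk]; omega) (by simp only [Fin.val_mk]; omega), zero_mul])] at e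
  rw [Finset.sum_pair (by simp [Fin.ext_iff])] at e
  exact sq_helper
    (bmat_pm_one σ (by simp only [Fin.val_mk]; omega)
      (cartanC_left (by simp only [Fin.val_mk]) (by simp only [Fin.val_mk]; omega)))
    (bmat_pm_one σ (by simp only [Fin.val_mk]; omega)
      (cartanC_right (by simp only [Fin.val_mk])))
    e

lemma int_sq_zero {x : ℤ} (h : x ^ 2 = 0) : x = 0 := by
  exact pow_eq_zero_iff (by norm_num) |>.mp h

lemma iff_of_sub_eq {P Q : Prop} [Decidable P] [Decidable Q]
    (h : (if P then (1:ℤ) else 0) - (if Q then 1 else 0) = 0) : P ↔ Q := by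
  split_ifs at h <;> simp_all

lemma not_iff_of_sub_ne {P Q : Prop} [Decidable P] [Decidable Q]
    (h : (if P then (1:ℤ) else 0) - (if Q then 1 else 0) ≠ 0) : ¬(P ↔ Q) := by
  split_ifs at h <;> simp_all

set_option maxHeartbeats 1600000 in
/-- In type `Cₙ` with `n = 2k+1` odd, `n ≥ 5`, the acyclic exchange matrix `B_σ` is
injective on the set of positive roots. -/
theorem Bmat_injOn_posRoots_typeC (k : ℕ) (hk : 2 ≤ k)
    (σ : Equiv.Perm (Fin (2 * k + 1))) (α β : Fin (2 * k + 1) → ℤ)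
    (hα : IsPosRootC (2 * k + 1) α) (hβ : IsPosRootC (2 * k + 1) β)
    (h : (Bmat (cartanC (2 * k + 1)) σ).mulVec α =
         (Bmat (cartanC (2 * k + 1)) σ).mulVec β) :
    α = β := by
  have hw : (Bmat (cartanC (2 * k + 1)) σ).mulVec (α - β) = 0 := by
    rw [Matrix.mulVec_sub, h, sub_self]
  have hw1 : (α - β) ⟨1, by omega⟩ = 0 := first_eq σ (α - β) hw (by omega)
  have hstep := interior_eq σ (α - β) hw
  have hodd : ∀ m : ℕ, (hm : 2 * m + 1 < 2 * k + 1) → (α - β) ⟨2 * m + 1, hm⟩ = 0 := by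
    have hsq : ∀ m : ℕ, (hm : 2 * m + 1 < 2 * k + 1) →
        (α - β) ⟨2 * m + 1, hm⟩ ^ 2 = 0 := by
      intro m
      induction m with
      | zero =>
        intro hm
        have e : (α - β) ⟨2 * 0 + 1, hm⟩ = 0 := hw1
        rw [e]; ring
      | succ m ih =>
        intro hm
        have e := hstep (2 * m + 1) (by omega)
        exact e.trans (ih (by omega))
    intro m hm
    exact int_sq_zero (hsq m hm)
  have heven : ∀ m : ℕ, (hm : 2 * m < 2 * k + 1) →
      (α - β) ⟨2 * m, hm⟩ ^ 2 = (α - β) ⟨0, by omega⟩ ^ 2 := by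
    intro m
    induction m with
    | zero => intro hm; rfl
    | succ m ih =>
      intro hm
      have e := hstep (2 * m) (by omega)
      exact e.trans (ih (by omega))
  have hall : (α - β) ⟨0, by omega⟩ = 0 → α = β := by
    intro h0
    funext i
    have hv : (α - β) i = 0 := by
      rcases Nat.even_or_odd i.val with ⟨m, hm⟩ | ⟨m, hm⟩
      · have hi : i = ⟨2 * m, by omega⟩ := Fin.ext (by simp only [Fin.val_mk]; omega)
        rw [hi]
        have e := heven m (by omega)
        rw [h0] at e
        have e2 : (α - β) ⟨2 * m, by omega⟩ ^ 2 = 0 := by rw [e]; ring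
        exact int_sq_zero e2
      · have hi : i = ⟨2 * m + 1, by omega⟩ := Fin.ext (by simp only [Fin.val_mk]; omega)
        rw [hi]
        exact hodd m (by omega)
    have := hv
    simp only [Pi.sub_apply] at this
    linarith
  rcases hα with ⟨a, b, hab, hbn, hav⟩ | ⟨a, b, hab, hbn, hav⟩ <;>
    rcases hβ with ⟨a', b', hab', hbn', hbv⟩ | ⟨a', b', hab', hbn', hbv⟩
  · -- (i)-(i)
    by_cases h0 : (α - β) ⟨0, by omega⟩ = 0
    · exact hall h0
    · exfalso
      have key : ∀ j : ℕ, (hj : j < 2 * k + 1) → (α - β) ⟨j, hj⟩ =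
          (if a ≤ j ∧ j ≤ b then (1:ℤ) else 0) -
          (if a' ≤ j ∧ j ≤ b' then (1:ℤ) else 0) := by
        intro j hj
        rw [hav, hbv]
        simp only [Pi.sub_apply, Fin.val_mk]
      have hne : ∀ m : ℕ, (hm : 2 * m < 2 * k + 1) → (α - β) ⟨2 * m, hm⟩ ≠ 0 := by
        intro m hm hz
        apply h0
        have e := heven m hm
        rw [hz] at e
        have e2 : (α - β) ⟨0, by omega⟩ ^ 2 = 0 := by rw [← e]; ring
        exact int_sq_zero e2
      have E0 : ((if a ≤ 0 ∧ 0 ≤ b then (1:ℤ) else 0) -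
          (if a' ≤ 0 ∧ 0 ≤ b' then (1:ℤ) else 0)) ≠ 0 := by
        rw [← key 0 (by omega)]; exact hne 0 (by omega)
      have E2 : ((if a ≤ 2 ∧ 2 ≤ b then (1:ℤ) else 0) -
          (if a' ≤ 2 ∧ 2 ≤ b' then (1:ℤ) else 0)) ≠ 0 := by
        rw [← key 2 (by omega)]; exact hne 1 (by omega)
      have E4 : ((if a ≤ 4 ∧ 4 ≤ b then (1:ℤ) else 0) -
          (if a' ≤ 4 ∧ 4 ≤ b' then (1:ℤ) else 0)) ≠ 0 := by
        rw [← key 4 (by omega)]; exact hne 2 (by omega)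
      have E1 : ((if a ≤ 1 ∧ 1 ≤ b then (1:ℤ) else 0) -
          (if a' ≤ 1 ∧ 1 ≤ b' then (1:ℤ) else 0)) = 0 := by
        rw [← key 1 (by omega)]; exact hodd 0 (by omega)
      have E3 : ((if a ≤ 3 ∧ 3 ≤ b then (1:ℤ) else 0) -
          (if a' ≤ 3 ∧ 3 ≤ b' then (1:ℤ) else 0)) = 0 := by
        rw [← key 3 (by omega)]; exact hodd 1 (by omega)
      have I0 := not_iff_of_sub_ne E0
      have I1 := iff_of_sub_eq E1
      have I2 := not_iff_of_sub_ne E2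
      have I3 := iff_of_sub_eq E3
      have I4 := not_iff_of_sub_ne E4
      omega
  · -- (i)-(ii)
    exfalso
    have hz := hodd (k - 1) (by omega)
    rw [hav, hbv] at hz
    simp only [Pi.sub_apply, Fin.val_mk] at hz
    split_ifs at hz <;> omega
  · -- (ii)-(i)
    exfalso
    have hz := hodd (k - 1) (by omega)
    rw [hav, hbv] at hz
    simp only [Pi.sub_apply, Fin.val_mk] at hz
    split_ifs at hz <;> omega
  · -- (ii)-(ii)
    apply hall
    have hz : (α - β) ⟨2 * k, by omega⟩ = 0 := by
      rw [hav, hbv]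
      simp only [Pi.sub_apply, Fin.val_mk]
      rw [if_pos (by omega), if_pos (by omega)]
      ring
    have e := heven k (by omega)
    rw [hz] at e
    have e2 : (α - β) ⟨0, by omega⟩ ^ 2 = 0 := by rw [← e]; ring
    exact int_sq_zero e2
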